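/- Fix ℓ ∈ ℕ₀ and d = (d_1,…,d_ℓ), r = (r_1,…,r_ℓ) ∈ ℕ^ℓ with d_1 = n, and set m_ℓ := Σ_{k=1}^ℓ (r_k − 1)·∏_{i=k+1}^ℓ d_i. Then N_n(ℓ,d,r) ⊆ MAX_n(m_ℓ + 1), i.e., every function computable by an indegree-d-constrained rank-r maxout network with ℓ hidden layers is a finite real linear combination of maxima of at most m_ℓ + 1 linear functions. -/

import Mathlib

open Pointwise

noncomputable section SparseMaxout

/-- Vectors in `ℝ^n`. -/
abbrev Vec (n : ℕ) := Fin n → ℝ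

/-- A polytope is the convex hull of a finite nonempty set of points. -/
def IsPolytope {n : ℕ} (P : Set (Vec n)) : Prop :=
  ∃ s : Finset (Vec n), s.Nonempty ∧ P = convexHull ℝ (s : Set (Vec n))

/-- A simplex is the convex hull of a finite nonempty affinely independent set of points. -/
def IsSimplex {n : ℕ} (S : Set (Vec n)) : Prop :=
  ∃ (k : ℕ) (pts : Fin k → Vec n), 0 < k ∧ AffineIndependent ℝ pts ∧
    S = convexHull ℝ (Set.range pts)

/-- The support function `f_P(x) = max_{a ∈ P} ⟨a, x⟩` of a set `P`. -/
def suppFn {n : ℕ} (P : Set (Vec n)) (x : Vec n) : ℝ :=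
  sSup ((fun a => ∑ i, a i * x i) '' P)

/-- The dimension of a polytope: the dimension of its affine hull. -/
def polyDim {n : ℕ} (P : Set (Vec n)) : ℕ :=
  Module.finrank ℝ (affineSpan ℝ P).direction

/-- A (representative of a) virtual polytope: a pair `(P, Q)` standing for `P - Q`. -/
abbrev VP (n : ℕ) := Set (Vec n) × Set (Vec n)

/-- Two pairs represent the same virtual polytope: `P₁ - Q₁ = P₂ - Q₂` iff
`P₁ + Q₂ = P₂ + Q₁` (Minkowski sums). -/
def vEquiv {n : ℕ} (A B : VP n) : Prop :=
  A.1 + B.2 = B.1 + A.2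

/-- Both components are polytopes. -/
def IsPolyPair {n : ℕ} (A : VP n) : Prop :=
  IsPolytope A.1 ∧ IsPolytope A.2

/-- Scalar multiple of a virtual polytope: `λ(P - Q) := λP - λQ`. -/
def vSMul {n : ℕ} (c : ℝ) (A : VP n) : VP n := (c • A.1, c • A.2)

/-- Convex hull of finitely many virtual polytopes:
`conv(P₁-Q₁, …, P_m-Q_m) := conv(⋃ᵢ (Pᵢ + Σ_{k≠i} Q_k)) - Σ_k Q_k`. -/
def vConv {n m : ℕ} (V : Fin m → VP n) : VP n :=
  (convexHull ℝ (⋃ i, ((V i).1 + ∑ k ∈ Finset.univ.erase i, (V k).2)),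
   ∑ k, (V k).2)

/-- The dimension of a virtual polytope: `min{dim(A + B) : V = A - B}` over
polytope representations. -/
def vDim {n : ℕ} (V : VP n) : ℕ :=
  sInf {m | ∃ A B : Set (Vec n), IsPolytope A ∧ IsPolytope B ∧
    vEquiv (A, B) V ∧ polyDim (A + B) = m}

/-- Support function of a virtual polytope: `f_{P-Q} := f_P - f_Q`. -/
def vSuppFn {n : ℕ} (V : VP n) (x : Vec n) : ℝ :=
  suppFn V.1 x - suppFn V.2 x

/-- The recursively defined classes `Q̂_ℓ` of virtual polytopes dual to sparse maxout
networks with indegree constraints `d` and ranks `r` (layer `k` uses `d k`, `r k`);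
membership is up to equality of virtual polytopes. -/
def Qhat (n : ℕ) (d r : ℕ → ℕ) : ℕ → Set (VP n)
  | 0 => {V | IsPolyPair V ∧ ∃ v : Vec n, vEquiv V ({v}, {0})}
  | (k+1) => {V | IsPolyPair V ∧
      ∃ (α : Fin (r (k+1)) → Fin (d (k+1)) → ℝ) (W : Fin (d (k+1)) → VP n),
        (∀ j, W j ∈ Qhat n d r k) ∧
        vEquiv V (vConv (fun i => ∑ j, vSMul (α i j) (W j)))}

/-- `Q_n(ℓ,d,r)`: finite real linear combinations of elements of `Q̂_ℓ`. -/
def Qfull (n : ℕ) (d r : ℕ → ℕ) (ℓ : ℕ) : Set (VP n) :=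
  {V | IsPolyPair V ∧ ∃ (p : ℕ) (c : Fin p → ℝ) (W : Fin p → VP n),
    (∀ i, W i ∈ Qhat n d r ℓ) ∧ vEquiv V (∑ i, vSMul (c i) (W i))}

/-- `m_ℓ = Σ_{k=1}^ℓ (r_k - 1) ∏_{i=k+1}^ℓ d_i`. -/
def mval (d r : ℕ → ℕ) (ℓ : ℕ) : ℕ :=
  ∑ k ∈ Finset.Icc 1 ℓ, (r k - 1) * ∏ i ∈ Finset.Icc (k+1) ℓ, d i

/-- The recursively defined classes `N̂_ℓ` of functions computed by a single output
neuron of an indegree-`d`-constrained rank-`r` maxout network with `ℓ` hidden layers. -/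
def Nhat (n : ℕ) (d r : ℕ → ℕ) : ℕ → Set ((Vec n) → ℝ)
  | 0 => {f | ∃ v : Vec n, f = fun x => ∑ i, v i * x i}
  | (k+1) => {f | ∃ (α : Fin (r (k+1)) → Fin (d (k+1)) → ℝ)
      (g : Fin (d (k+1)) → (Vec n) → ℝ),
      (∀ j, g j ∈ Nhat n d r k) ∧
      f = fun x => ⨆ i, ∑ j, α i j * g j x}

/-- `N_n(ℓ,d,r)`: finite real linear combinations of functions in `N̂_ℓ`. -/
def Nfull (n : ℕ) (d r : ℕ → ℕ) (ℓ : ℕ) : Set ((Vec n) → ℝ) :=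
  {f | ∃ (p : ℕ) (c : Fin p → ℝ) (g : Fin p → (Vec n) → ℝ),
    (∀ i, g i ∈ Nhat n d r ℓ) ∧ f = fun x => ∑ i, c i * g i x}

/-- Unconstrained single-neuron classes `N̂_ℓ` (no indegree constraint). -/
def NhatU (n : ℕ) (r : ℕ → ℕ) : ℕ → Set ((Vec n) → ℝ)
  | 0 => {f | ∃ v : Vec n, f = fun x => ∑ i, v i * x i}
  | (k+1) => {f | ∃ (m : ℕ) (α : Fin (r (k+1)) → Fin m → ℝ)
      (g : Fin m → (Vec n) → ℝ),
      (∀ j, g j ∈ NhatU n r k) ∧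
      f = fun x => ⨆ i, ∑ j, α i j * g j x}

/-- `N_n(ℓ,r)`: finite real linear combinations of functions in the unconstrained `N̂_ℓ`. -/
def NfullU (n : ℕ) (r : ℕ → ℕ) (ℓ : ℕ) : Set ((Vec n) → ℝ) :=
  {f | ∃ (p : ℕ) (c : Fin p → ℝ) (g : Fin p → (Vec n) → ℝ),
    (∀ i, g i ∈ NhatU n r ℓ) ∧ f = fun x => ∑ i, c i * g i x}

/-- `MAX_n(m)`: finite real linear combinations of maxima of at most `m` linear functions. -/
def MAXn (n m : ℕ) : Set ((Vec n) → ℝ) :=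
  {f | ∃ (p : ℕ) (β : Fin p → ℝ) (a : Fin p → Fin m → Vec n),
    f = fun x => ∑ i, β i * ⨆ j, ∑ t, a i j t * x t}
namespace SMProof

variable {n : ℕ}

/-- evaluation of the linear function with gradient `a` -/
def lin (a x : Vec n) : ℝ := ∑ t, a t * x t

lemma lin_add (a b x : Vec n) : lin (a + b) x = lin a x + lin b x := by
  simp [lin, add_mul, Finset.sum_add_distrib]

lemma lin_smul (c : ℝ) (a x : Vec n) : lin (c • a) x = c * lin a x := by
  simp [lin, Finset.mul_sum, mul_assoc]

lemma lin_zero (x : Vec n) : lin (0 : Vec n) x = 0 := by simp [lin]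

lemma lin_sum {ι : Type*} (t : Finset ι) (f : ι → Vec n) (x : Vec n) :
    lin (∑ i ∈ t, f i) x = ∑ i ∈ t, lin (f i) x := by
  classical
  induction t using Finset.cons_induction with
  | empty => simp [lin_zero]
  | cons a s ha ih => rw [Finset.sum_cons, lin_add, ih, Finset.sum_cons]

/-- max of linear functions over a finite point set -/
noncomputable def pmax (S : Finset (Vec n)) (x : Vec n) : ℝ :=
  if h : S.Nonempty then S.sup' h (fun a => lin a x) else 0

lemma pmax_eq (S : Finset (Vec n)) (h : S.Nonempty) (x : Vec n) :
    pmax S x = S.sup' h (fun a => lin a x) := dif_pos h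

lemma le_pmax {S : Finset (Vec n)} {a : Vec n} (ha : a ∈ S) (x : Vec n) :
    lin a x ≤ pmax S x := by
  rw [pmax_eq S ⟨a, ha⟩]; exact Finset.le_sup' (fun a => lin a x) ha

lemma pmax_le {S : Finset (Vec n)} (h : S.Nonempty) {x : Vec n} {c : ℝ}
    (hc : ∀ a ∈ S, lin a x ≤ c) : pmax S x ≤ c := by
  rw [pmax_eq S h]; exact Finset.sup'_le h _ hc

lemma exists_pmax (S : Finset (Vec n)) (h : S.Nonempty) (x : Vec n) :
    ∃ a ∈ S, pmax S x = lin a x := by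
  rw [pmax_eq S h]
  obtain ⟨a, ha, he⟩ := Finset.exists_mem_eq_sup' h (fun a => lin a x)
  exact ⟨a, ha, he⟩

lemma pmax_singleton (a x : Vec n) : pmax {a} x = lin a x := by
  rw [pmax_eq {a} (Finset.singleton_nonempty a)]; simp

lemma pmax_zero (x : Vec n) : pmax (0 : Finset (Vec n)) x = 0 := by
  classical
  have : (0 : Finset (Vec n)) = {0} := rfl
  rw [this, pmax_singleton, lin_zero]

lemma pmax_insert_of_le {S : Finset (Vec n)} (h : S.Nonempty) {a : Vec n} {x : Vec n}
    (hle : lin a x ≤ pmax S x) : pmax (insert a S) x = pmax S x := by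
  classical
  apply le_antisymm
  · refine pmax_le (h.mono (Finset.subset_insert a S)) ?_
    intro b hb
    rcases Finset.mem_insert.1 hb with rfl | hb
    · exact hle
    · exact le_pmax hb x
  · refine pmax_le h fun b hb => le_pmax (Finset.mem_insert_of_mem hb) x

lemma pmax_union {A B : Finset (Vec n)} (hA : A.Nonempty) (hB : B.Nonempty) (x : Vec n) :
    pmax (A ∪ B) x = max (pmax A x) (pmax B x) := by
  classical
  rw [pmax_eq (A ∪ B) (hA.mono Finset.subset_union_left), pmax_eq A hA, pmax_eq B hB]
  exact Finset.sup'_union hA hB _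

lemma pmax_add {A B : Finset (Vec n)} (hA : A.Nonempty) (hB : B.Nonempty) (x : Vec n) :
    pmax (A + B) x = pmax A x + pmax B x := by
  classical
  apply le_antisymm
  · refine pmax_le (hA.add hB) fun c hc => ?_
    obtain ⟨a, ha, b, hb, rfl⟩ := Finset.mem_add.1 hc
    rw [lin_add]
    exact add_le_add (le_pmax ha x) (le_pmax hb x)
  · obtain ⟨a, ha, hea⟩ := exists_pmax A hA x
    obtain ⟨b, hb, heb⟩ := exists_pmax B hB x
    rw [hea, heb, ← lin_add]
    exact le_pmax (Finset.add_mem_add ha hb) x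

lemma pmax_smul {A : Finset (Vec n)} (hA : A.Nonempty) {c : ℝ} (hc : 0 ≤ c) (x : Vec n) :
    pmax (c • A) x = c * pmax A x := by
  classical
  apply le_antisymm
  · refine pmax_le (hA.smul_finset) fun b hb => ?_
    obtain ⟨a, ha, rfl⟩ := Finset.mem_smul_finset.1 hb
    rw [lin_smul]
    exact mul_le_mul_of_nonneg_left (le_pmax ha x) hc
  · obtain ⟨a, ha, hea⟩ := exists_pmax A hA x
    rw [hea, ← lin_smul]
    exact le_pmax (Finset.smul_mem_smul_finset ha) x

lemma nonempty_sumF {ι : Type*} (t : Finset ι) (F : ι → Finset (Vec n))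
    (h : ∀ i ∈ t, (F i).Nonempty) : (∑ i ∈ t, F i).Nonempty := by
  classical
  induction t using Finset.cons_induction with
  | empty => exact ⟨0, by rw [Finset.sum_empty]; exact Finset.mem_singleton_self 0⟩
  | cons a s ha ih =>
      rw [Finset.sum_cons]
      exact (h a (Finset.mem_cons_self a s)).add
        (ih fun i hi => h i (Finset.mem_cons_of_mem hi))

lemma pmax_sumF {ι : Type*} (t : Finset ι) (F : ι → Finset (Vec n))
    (h : ∀ i ∈ t, (F i).Nonempty) (x : Vec n) :
    pmax (∑ i ∈ t, F i) x = ∑ i ∈ t, pmax (F i) x := by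
  classical
  induction t using Finset.cons_induction with
  | empty => simp [Finset.sum_empty, pmax_zero]
  | cons a s ha ih =>
      rw [Finset.sum_cons, Finset.sum_cons,
        pmax_add (h a (Finset.mem_cons_self a s))
          (nonempty_sumF s F fun i hi => h i (Finset.mem_cons_of_mem hi)),
        ih (fun i hi => h i (Finset.mem_cons_of_mem hi))]

lemma span_mem_sumF {ι : Type*} (U : Submodule ℝ (Vec n)) (t : Finset ι)
    (F : ι → Finset (Vec n)) (base : ι → Vec n)
    (hF : ∀ i ∈ t, ∀ e ∈ F i, e - base i ∈ U) :
    ∀ e ∈ ∑ i ∈ t, F i, e - ∑ i ∈ t, base i ∈ U := by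
  classical
  induction t using Finset.cons_induction with
  | empty =>
      intro e he
      simp only [Finset.sum_empty] at he ⊢
      have : e = 0 := by simpa using he
      simp [this]
  | cons a s ha ih =>
      intro e he
      rw [Finset.sum_cons] at he
      obtain ⟨u, hu, w, hw, rfl⟩ := Finset.mem_add.1 he
      rw [Finset.sum_cons]
      have h1 : u - base a ∈ U := hF a (Finset.mem_cons_self a s) u hu
      have h2 : w - ∑ i ∈ s, base i ∈ U :=
        ih (fun i hi => hF i (Finset.mem_cons_of_mem hi)) w hw
      have : u + w - (base a + ∑ i ∈ s, base i)
          = (u - base a) + (w - ∑ i ∈ s, base i) := by abel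
      rw [this]
      exact U.add_mem h1 h2

lemma fin_iSup_eq_sup' {k : ℕ} (hk : 0 < k) (f : Fin k → ℝ) :
    (⨆ i, f i) = Finset.univ.sup' (by
      haveI : Nonempty (Fin k) := ⟨⟨0, hk⟩⟩; exact Finset.univ_nonempty) f := by
  haveI : Nonempty (Fin k) := ⟨⟨0, hk⟩⟩
  exact (Finset.sup'_univ_eq_ciSup f).symm

lemma sup'_add_const {ι : Type*} {s : Finset ι} (hs : s.Nonempty) (f : ι → ℝ) (c : ℝ) :
    s.sup' hs (fun i => f i + c) = s.sup' hs f + c := by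
  apply le_antisymm
  · exact Finset.sup'_le _ _ fun i hi => (add_le_add_iff_right c).2 (Finset.le_sup' f hi)
  · obtain ⟨i, hi, he⟩ := Finset.exists_mem_eq_sup' hs f
    rw [he]
    exact Finset.le_sup' (fun i => f i + c) hi

end SMProof
namespace SMProof

variable {n : ℕ}

lemma maxn_zero (M : ℕ) : (fun _ : Vec n => (0:ℝ)) ∈ MAXn n M := by
  refine ⟨0, Fin.elim0, Fin.elim0, ?_⟩
  funext x
  simp

lemma maxn_add {M : ℕ} {f g : Vec n → ℝ} (hf : f ∈ MAXn n M) (hg : g ∈ MAXn n M) :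
    (fun x => f x + g x) ∈ MAXn n M := by
  obtain ⟨p, β, a, rfl⟩ := hf
  obtain ⟨q, γ, b, rfl⟩ := hg
  refine ⟨p + q, Fin.addCases β γ, Fin.addCases a b, ?_⟩
  funext x
  rw [Fin.sum_univ_add]
  simp

lemma maxn_smul {M : ℕ} (c : ℝ) {f : Vec n → ℝ} (hf : f ∈ MAXn n M) :
    (fun x => c * f x) ∈ MAXn n M := by
  obtain ⟨p, β, a, rfl⟩ := hf
  refine ⟨p, fun i => c * β i, a, ?_⟩
  funext x
  rw [Finset.mul_sum]
  simp [mul_assoc]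

lemma maxn_sub {M : ℕ} {f g : Vec n → ℝ} (hf : f ∈ MAXn n M) (hg : g ∈ MAXn n M) :
    (fun x => f x - g x) ∈ MAXn n M := by
  have := maxn_add hf (maxn_smul (-1) hg)
  simpa [sub_eq_add_neg] using this

lemma maxn_sum {M : ℕ} {ι : Type*} (t : Finset ι) (c : ι → ℝ) (F : ι → Vec n → ℝ)
    (h : ∀ i ∈ t, F i ∈ MAXn n M) :
    (fun x => ∑ i ∈ t, c i * F i x) ∈ MAXn n M := by
  classical
  induction t using Finset.cons_induction with
  | empty => simpa using maxn_zero M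
  | cons a s ha ih =>
      have : (fun x => ∑ i ∈ Finset.cons a s ha, c i * F i x)
          = fun x => c a * F a x + ∑ i ∈ s, c i * F i x := by
        funext x; rw [Finset.sum_cons]
      rw [this]
      exact maxn_add (maxn_smul (c a) (h a (Finset.mem_cons_self a s)))
        (ih fun i hi => h i (Finset.mem_cons_of_mem hi))

lemma maxn_pmax {M : ℕ} (hM : 0 < M) (S : Finset (Vec n)) (hS : S.Nonempty)
    (hc : S.card ≤ M) : (fun x => pmax S x) ∈ MAXn n M := by
  classical
  haveI : Nonempty (Fin M) := ⟨⟨0, hM⟩⟩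
  set e : Fin S.card → Vec n := fun i => ((S.equivFin.symm i : S) : Vec n) with he
  set a0 : Fin M → Vec n := fun j =>
    if h : (j : ℕ) < S.card then e ⟨j, h⟩ else hS.choose with ha0
  have key : ∀ x, (⨆ j : Fin M, lin (a0 j) x) = pmax S x := by
    intro x
    apply le_antisymm
    · apply ciSup_le
      intro j
      have hmem : a0 j ∈ S := by
        rw [ha0]
        by_cases h : (j : ℕ) < S.card
        · simp only [dif_pos h]
          exact (S.equivFin.symm ⟨j, h⟩).2
        · simp only [dif_neg h]
          exact hS.choose_spec
      exact le_pmax hmem x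
    · refine pmax_le hS fun p hp => ?_
      set i : Fin S.card := S.equivFin ⟨p, hp⟩ with hi
      have hlt : (i : ℕ) < M := lt_of_lt_of_le i.isLt hc
      have : a0 ⟨i, hlt⟩ = p := by
        rw [ha0]
        simp only [dif_pos i.isLt]
        have : (⟨(i : ℕ), i.isLt⟩ : Fin S.card) = i := rfl
        rw [this, hi, he]
        simp
      calc lin p x = lin (a0 ⟨i, hlt⟩) x := by rw [this]
        _ ≤ ⨆ j : Fin M, lin (a0 j) x :=
            le_ciSup (Set.Finite.bddAbove (Set.finite_range (fun j : Fin M => lin (a0 j) x))) (⟨(i:ℕ), hlt⟩ : Fin M)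
  refine ⟨1, fun _ => 1, fun _ => a0, ?_⟩
  funext x
  rw [Fin.sum_univ_one, one_mul]
  exact (key x).symm

end SMProof
namespace SMProof

variable {n : ℕ}

/-- the alternating-sum identity over subsets of `I`, via an involution -/
lemma key_involution (I R : Finset (Vec n)) (z : Vec n) (x : Vec n)
    (h1 : ∃ p ∈ I, lin p x ≤ lin z x) :
    ∑ A ∈ I.powerset, (-1 : ℝ) ^ A.card * pmax (insert z (A ∪ R)) x = 0 := by
  classical
  obtain ⟨p₀, hp₀I, hp₀le⟩ := h1
  have hzmem : ∀ A : Finset (Vec n), z ∈ insert z (A ∪ R) := fun A => Finset.mem_insert_self _ _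
  have hpm : ∀ A : Finset (Vec n), pmax (insert p₀ (insert z (A ∪ R))) x
      = pmax (insert z (A ∪ R)) x := by
    intro A
    exact pmax_insert_of_le ⟨z, hzmem A⟩ (le_trans hp₀le (le_pmax (hzmem A) x))
  have hset : ∀ A : Finset (Vec n), p₀ ∈ A →
      insert z (A ∪ R) = insert p₀ (insert z ((A.erase p₀) ∪ R)) := by
    intro A hA
    ext q
    simp only [Finset.mem_insert, Finset.mem_union, Finset.mem_erase]
    constructor
    · rintro (rfl | hq | hq)
      · tauto
      · by_cases hq0 : q = p₀ <;> tauto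
      · tauto
    · rintro (rfl | rfl | ⟨⟨_, hq⟩⟩ | hq) <;> tauto
  refine Finset.sum_involution
    (fun A _ => if p₀ ∈ A then A.erase p₀ else insert p₀ A) ?_ ?_ ?_ ?_
  · intro A hA
    by_cases h : p₀ ∈ A
    · rw [if_pos h]
      have hcard : A.card = (A.erase p₀).card + 1 := by
        rw [Finset.card_erase_of_mem h]
        have : 1 ≤ A.card := Finset.card_pos.2 ⟨p₀, h⟩
        omega
      have hval : pmax (insert z (A ∪ R)) x = pmax (insert z ((A.erase p₀) ∪ R)) x := by
        rw [hset A h, hpm]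
      rw [hval, hcard, pow_succ]
      ring
    · rw [if_neg h]
      have hcard : (insert p₀ A).card = A.card + 1 := Finset.card_insert_of_notMem h
      have hval : pmax (insert z ((insert p₀ A) ∪ R)) x = pmax (insert z (A ∪ R)) x := by
        have hmem : p₀ ∈ insert p₀ A := Finset.mem_insert_self _ _
        rw [hset _ hmem, Finset.erase_insert h, hpm]
      rw [hval, hcard, pow_succ]
      ring
  · intro A hA _
    by_cases h : p₀ ∈ A
    · rw [if_pos h]
      intro hc
      rw [Finset.erase_eq_self] at hc
      exact hc h
    · rw [if_neg h]
      intro hc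
      exact h (Finset.insert_eq_self.mp hc)
  · intro A hA
    rw [Finset.mem_powerset] at hA ⊢
    by_cases h : p₀ ∈ A
    · rw [if_pos h]
      exact le_trans (Finset.erase_subset _ _) hA
    · rw [if_neg h]
      exact Finset.insert_subset (hp₀I) hA
  · intro A hA
    by_cases h : p₀ ∈ A
    · rw [if_pos h, if_neg (Finset.notMem_erase p₀ A)]
      exact Finset.insert_erase h
    · rw [if_neg h, if_pos (Finset.mem_insert_self p₀ A)]
      exact Finset.erase_insert h

/-- weighted averages lie between min and max -/
lemma wavg_le (t : Finset (Vec n)) (ht : t.Nonempty) (w : Vec n → ℝ)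
    (hw : ∀ p ∈ t, 0 ≤ w p) {σ : ℝ} (hσ : ∑ p ∈ t, w p = σ) (hσpos : 0 < σ) (x : Vec n) :
    ∃ p ∈ t, lin (σ⁻¹ • ∑ q ∈ t, w q • q) x ≤ lin p x := by
  obtain ⟨p, hp, hmax⟩ := Finset.exists_max_image t (fun q => lin q x) ht
  refine ⟨p, hp, ?_⟩
  rw [lin_smul, lin_sum]
  have hb : ∑ q ∈ t, lin (w q • q) x ≤ σ * lin p x := by
    rw [← hσ, Finset.sum_mul]
    refine Finset.sum_le_sum fun q hq => ?_
    rw [lin_smul]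
    exact mul_le_mul_of_nonneg_left (hmax q hq) (hw q hq)
  calc σ⁻¹ * ∑ q ∈ t, lin (w q • q) x ≤ σ⁻¹ * (σ * lin p x) :=
        mul_le_mul_of_nonneg_left hb (inv_nonneg.2 hσpos.le)
    _ = lin p x := by field_simp

lemma le_wavg (t : Finset (Vec n)) (ht : t.Nonempty) (w : Vec n → ℝ)
    (hw : ∀ p ∈ t, 0 ≤ w p) {σ : ℝ} (hσ : ∑ p ∈ t, w p = σ) (hσpos : 0 < σ) (x : Vec n) :
    ∃ p ∈ t, lin p x ≤ lin (σ⁻¹ • ∑ q ∈ t, w q • q) x := by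
  obtain ⟨p, hp, hmin⟩ := Finset.exists_min_image t (fun q => lin q x) ht
  refine ⟨p, hp, ?_⟩
  rw [lin_smul, lin_sum]
  have hb : σ * lin p x ≤ ∑ q ∈ t, lin (w q • q) x := by
    rw [← hσ, Finset.sum_mul]
    refine Finset.sum_le_sum fun q hq => ?_
    rw [lin_smul]
    exact mul_le_mul_of_nonneg_left (hmin q hq) (hw q hq)
  calc lin p x = σ⁻¹ * (σ * lin p x) := by field_simp
    _ ≤ σ⁻¹ * ∑ q ∈ t, lin (w q • q) x :=
        mul_le_mul_of_nonneg_left hb (inv_nonneg.2 hσpos.le)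

end SMProof
namespace SMProof

variable {n : ℕ}

/-- Main reduction: a max of linear functions with gradients in `v + span E`,
`|E| ≤ M`, is a linear combination of maxes of at most `M+1` linear functions. -/
lemma lemW (M : ℕ) :
    ∀ (k : ℕ) (S : Finset (Vec n)), S.card ≤ k → S.Nonempty →
    ∀ (E : Finset (Vec n)), E.card ≤ M →
    ∀ (v : Vec n), (∀ p ∈ S, p - v ∈ Submodule.span ℝ (E : Set (Vec n))) →
    (fun x => pmax S x) ∈ MAXn n (M + 1) := by
  classical
  intro k
  induction k with
  | zero =>
      intro S hcard hSne E hE v hv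
      have := hSne.card_pos
      omega
  | succ k ih =>
      intro S hcard hSne E hE v hv
      by_cases hsmall : S.card ≤ M + 1
      · exact maxn_pmax (Nat.succ_pos M) S hSne hsmall
      · push_neg at hsmall
        obtain ⟨p₀, hp₀⟩ := hSne
        set U : Submodule ℝ (Vec n) := Submodule.span ℝ (E : Set (Vec n)) with hU
        haveI : FiniteDimensional ℝ U := FiniteDimensional.span_of_finite ℝ E.finite_toSet
        have hrank : Module.finrank ℝ U ≤ M := by
          refine le_trans ?_ hE
          exact finrank_span_finset_le_card E
        set fam : ↥(S.erase p₀) → U := fun p =>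
          ⟨(p : Vec n) - p₀, by
            have h := U.sub_mem (hv _ (Finset.mem_erase.1 p.2).2) (hv p₀ hp₀)
            rwa [sub_sub_sub_cancel_right] at h⟩ with hfam
        have hnli : ¬ LinearIndependent ℝ fam := by
          intro hli
          have hcle := hli.fintype_card_le_finrank
          rw [Fintype.card_coe, Finset.card_erase_of_mem hp₀] at hcle
          omega
        obtain ⟨g, hgsum, i₀, hgi₀⟩ := Fintype.not_linearIndependent_iff.1 hnli
        -- coefficient function on points
        set c : Vec n → ℝ := fun p => if h : p ∈ S.erase p₀ then g ⟨p, h⟩ else 0 with hc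
        have hceq : ∑ p ∈ S.erase p₀, c p • (p - p₀) = 0 := by
          have h0 : ∑ i : ↥(S.erase p₀), g i • ((fam i : Vec n)) = 0 := by
            have := congrArg (Subtype.val : U → Vec n) hgsum
            simpa using this
          calc ∑ p ∈ S.erase p₀, c p • (p - p₀)
              = ∑ i : ↥(S.erase p₀), c ↑i • ((i : Vec n) - p₀) :=
                (Finset.sum_coe_sort _ _).symm
            _ = ∑ i : ↥(S.erase p₀), g i • ((fam i : Vec n)) := by
                refine Finset.sum_congr rfl fun i _ => ?_
                rw [hc]
                simp only [dif_pos i.2]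
                try rfl
            _ = 0 := h0
        set γ : Vec n → ℝ := fun p =>
          if p = p₀ then -∑ q ∈ S.erase p₀, c q else c p with hγ
        have hγerase : ∀ p ∈ S.erase p₀, γ p = c p := by
          intro p hp
          rw [hγ]
          simp only [if_neg (Finset.mem_erase.1 hp).1]
        have hγp₀ : γ p₀ = -∑ q ∈ S.erase p₀, c q := by rw [hγ]; simp
        have hγsum : ∑ p ∈ S, γ p = 0 := by
          rw [← Finset.sum_erase_add S γ hp₀, hγp₀,
            Finset.sum_congr rfl hγerase]
          ring
        have hγvec : ∑ p ∈ S, γ p • p = 0 := by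
          rw [← Finset.sum_erase_add S (fun p => γ p • p) hp₀]
          have h1 : ∑ p ∈ S.erase p₀, γ p • p = ∑ p ∈ S.erase p₀, c p • p :=
            Finset.sum_congr rfl fun p hp => by rw [hγerase p hp]
          have h2 : ∑ p ∈ S.erase p₀, c p • p
              = ∑ p ∈ S.erase p₀, (c p • (p - p₀) + c p • p₀) := by
            refine Finset.sum_congr rfl fun p hp => ?_
            rw [smul_sub]
            abel
          rw [h1, h2, Finset.sum_add_distrib, hceq, ← Finset.sum_smul, hγp₀]
          simp
        have hγi₀ : γ (↑i₀ : Vec n) ≠ 0 := by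
          rw [hγerase _ i₀.2, hc]
          simpa only [dif_pos i₀.2] using hgi₀
        -- positive / nonpositive parts
        set I : Finset (Vec n) := S.filter (fun p => 0 < γ p) with hIdef
        set J : Finset (Vec n) := S.filter (fun p => ¬ 0 < γ p) with hJdef
        have hIS : I ⊆ S := Finset.filter_subset _ _
        have hJS : J ⊆ S := Finset.filter_subset _ _
        have hIne : I.Nonempty := by
          rw [Finset.filter_nonempty_iff]
          by_contra hcon
          push_neg at hcon
          have hlt : ∑ p ∈ S, γ p < ∑ p ∈ S, (0:ℝ) := by
            refine Finset.sum_lt_sum (fun p hp => hcon p hp) ?_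
            refine ⟨↑i₀, (Finset.mem_erase.1 i₀.2).2, ?_⟩
            exact lt_of_le_of_ne (hcon _ (Finset.mem_erase.1 i₀.2).2) hγi₀
          rw [hγsum, Finset.sum_const_zero] at hlt
          exact lt_irrefl _ hlt
        have hJne : J.Nonempty := by
          rw [Finset.filter_nonempty_iff]
          by_contra hcon
          push_neg at hcon
          have hlt : (0:ℝ) < ∑ p ∈ S, γ p :=
            Finset.sum_pos (fun p hp => hcon p hp) ⟨p₀, hp₀⟩
          rw [hγsum] at hlt
          exact lt_irrefl _ hlt
        set σ : ℝ := ∑ p ∈ I, γ p with hσdef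
        have hσpos : 0 < σ :=
          Finset.sum_pos (fun p hp => (Finset.mem_filter.1 hp).2) hIne
        set z : Vec n := σ⁻¹ • ∑ p ∈ I, γ p • p with hz
        have hsplit : ∑ p ∈ I, γ p • p + ∑ p ∈ J, γ p • p = 0 := by
          rw [hIdef, hJdef, Finset.sum_filter_add_sum_filter_not, hγvec]
        have hsplitc : σ + ∑ p ∈ J, γ p = 0 := by
          rw [hσdef, hIdef, hJdef, Finset.sum_filter_add_sum_filter_not, hγsum]
        have hzJ : z = σ⁻¹ • ∑ p ∈ J, (-γ p) • p := by
          rw [hz]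
          congr 1
          have : ∑ p ∈ J, (-γ p) • p = -∑ p ∈ J, γ p • p := by
            rw [← Finset.sum_neg_distrib]
            exact Finset.sum_congr rfl fun p _ => by rw [neg_smul]
          rw [this]
          exact eq_neg_of_add_eq_zero_left hsplit
        have f1 : ∀ x, ∃ p ∈ I, lin p x ≤ lin z x := fun x =>
          le_wavg I hIne γ (fun p hp => ((Finset.mem_filter.1 hp).2).le) rfl hσpos x
        have f2 : ∀ x, ∃ p ∈ I, lin z x ≤ lin p x := fun x =>
          wavg_le I hIne γ (fun p hp => ((Finset.mem_filter.1 hp).2).le) rfl hσpos x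
        have f3 : ∀ x, ∃ p ∈ J, lin z x ≤ lin p x := by
          intro x
          rw [hzJ]
          refine wavg_le J hJne (fun p => -γ p)
            (fun p hp => ?_) ?_ hσpos x
          · have h' := (Finset.mem_filter.1 hp).2
            push_neg at h'
            show (0:ℝ) ≤ -γ p
            linarith
          · have hneg : ∑ p ∈ J, -γ p = -∑ p ∈ J, γ p := Finset.sum_neg_distrib _
            rw [hneg]
            linarith [hsplitc]
        have hIJS : I ∪ J = S := by
          rw [hIdef, hJdef, Finset.filter_union_filter_not_eq]
        -- pointwise decomposition
        have hdecomp : ∀ x, pmax S x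
            = ∑ A ∈ I.powerset.erase I,
                ((-1:ℝ) ^ I.card * -((-1:ℝ) ^ A.card)) * pmax (A ∪ J) x := by
          intro x
          have hkey := key_involution I J z x (f1 x)
          rw [← Finset.add_sum_erase _ _ (Finset.mem_powerset_self I)] at hkey
          have hIterm : pmax (insert z (I ∪ J)) x = pmax S x := by
            rw [hIJS]
            obtain ⟨p, hpI, hple⟩ := f2 x
            exact pmax_insert_of_le ⟨p₀, hp₀⟩ (le_trans hple (le_pmax (hIS hpI) x))
          have hAterm : ∀ A ∈ I.powerset.erase I,
              pmax (insert z (A ∪ J)) x = pmax (A ∪ J) x := by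
            intro A hA
            obtain ⟨p, hpJ, hple⟩ := f3 x
            exact pmax_insert_of_le (hJne.mono Finset.subset_union_right)
              (le_trans hple (le_pmax (Finset.mem_union_right A hpJ) x))
          rw [hIterm, Finset.sum_congr rfl (fun A hA => by rw [hAterm A hA])] at hkey
          have hsq : ((-1:ℝ)) ^ I.card * ((-1:ℝ)) ^ I.card = 1 := by
            rw [← pow_add]
            exact Even.neg_one_pow ⟨I.card, rfl⟩
          have := congrArg (fun u => ((-1:ℝ)) ^ I.card * u) hkey
          simp only [mul_add, ← mul_assoc, hsq, one_mul, mul_zero, Finset.mul_sum] at this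
          have h2 : pmax S x
              = -∑ A ∈ I.powerset.erase I, (-1:ℝ) ^ I.card * (-1:ℝ) ^ A.card * pmax (A ∪ J) x := by
            linarith [this]
          rw [h2, ← Finset.sum_neg_distrib]
          exact Finset.sum_congr rfl fun A hA => by ring
        have hfun : (fun x => pmax S x)
            = fun x => ∑ A ∈ I.powerset.erase I,
                ((-1:ℝ) ^ I.card * -((-1:ℝ) ^ A.card)) * pmax (A ∪ J) x :=
          funext hdecomp
        rw [hfun]
        refine maxn_sum _ _ _ fun A hA => ?_
        have hAI : A ⊆ I ∧ A ≠ I := by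
          rw [Finset.mem_erase, Finset.mem_powerset] at hA
          exact ⟨hA.2, hA.1⟩
        have hAcard : A.card < I.card :=
          Finset.card_lt_card (Finset.ssubset_iff_subset_ne.2 ⟨hAI.1, hAI.2⟩)
        refine ih (A ∪ J) ?_ (hJne.mono Finset.subset_union_right) E hE v ?_
        · have hcu : (A ∪ J).card ≤ A.card + J.card := Finset.card_union_le _ _
          have hIcount : I.card + J.card = S.card := by
            have hdisj : Disjoint I J := by
              rw [hIdef, hJdef]
              exact Finset.disjoint_filter_filter_not S S _
            rw [← Finset.card_union_of_disjoint hdisj, hIJS]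
          omega
        · intro q hq
          rcases Finset.mem_union.1 hq with h | h
          · exact hv q (hIS (hAI.1 h))
          · exact hv q (hJS h)

end SMProof
namespace SMProof

variable {n : ℕ}

/-- representation invariant: difference of two maxes of linear functions whose
gradients lie in translates of the span of a small finite set `E`. -/
def Rep (m : ℕ) (g : Vec n → ℝ) : Prop :=
  ∃ (E S₁ S₂ : Finset (Vec n)) (v w : Vec n),
    S₁.Nonempty ∧ S₂.Nonempty ∧ E.card ≤ m ∧
    (∀ p ∈ S₁, p - v ∈ Submodule.span ℝ (E : Set (Vec n))) ∧
    (∀ p ∈ S₂, p - w ∈ Submodule.span ℝ (E : Set (Vec n))) ∧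
    g = fun x => pmax S₁ x - pmax S₂ x

lemma rep_mono {m m' : ℕ} (h : m ≤ m') {g : Vec n → ℝ} (hg : Rep m g) : Rep m' g := by
  obtain ⟨E, S₁, S₂, v, w, h₁, h₂, hc, q₁, q₂, hf⟩ := hg
  exact ⟨E, S₁, S₂, v, w, h₁, h₂, le_trans hc h, q₁, q₂, hf⟩

lemma rep_base (v : Vec n) : Rep 0 (fun x => ∑ i, v i * x i) := by
  classical
  refine ⟨∅, {v}, {(0 : Vec n)}, v, 0, Finset.singleton_nonempty v,
    Finset.singleton_nonempty 0, le_rfl, ?_, ?_, ?_⟩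
  · intro p hp
    rw [Finset.mem_singleton] at hp
    simp [hp]
  · intro p hp
    rw [Finset.mem_singleton] at hp
    simp [hp]
  · funext x
    rw [pmax_singleton, pmax_singleton, lin_zero]
    simp [lin]

lemma rep_maxn {m : ℕ} {g : Vec n → ℝ} (hg : Rep m g) : g ∈ MAXn n (m + 1) := by
  obtain ⟨E, S₁, S₂, v, w, h₁, h₂, hc, q₁, q₂, rfl⟩ := hg
  exact maxn_sub (lemW m S₁.card S₁ le_rfl h₁ E hc v q₁)
    (lemW m S₂.card S₂ le_rfl h₂ E hc w q₂)

/-- the layer step -/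
lemma rep_step {m R D : ℕ} (hR : 0 < R) (hD : 0 < D) (α : Fin R → Fin D → ℝ)
    (G : Fin D → Vec n → ℝ) (hg : ∀ j, Rep m (G j)) :
    Rep (D * m + (R - 1)) (fun x => ⨆ i, ∑ j, α i j * G j x) := by
  classical
  choose E S₁ S₂ v w h₁ h₂ hcard hm₁ hm₂ hfun using hg
  haveI : Nonempty (Fin R) := ⟨⟨0, hR⟩⟩
  set i₀ : Fin R := ⟨0, hR⟩ with hi₀
  set C : Fin D → ℝ := fun j => ∑ i, |α i j| with hC
  have hCb : ∀ i j, |α i j| ≤ C j := fun i j =>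
    Finset.single_le_sum (fun i _ => abs_nonneg (α i j)) (Finset.mem_univ i)
  have hCpos : ∀ j, 0 ≤ C j := fun j =>
    Finset.sum_nonneg fun i _ => abs_nonneg (α i j)
  have hc1 : ∀ i j, 0 ≤ α i j + C j := fun i j => by
    have h := hCb i j; have h' := neg_abs_le (α i j); linarith
  have hc2 : ∀ i j, 0 ≤ C j - α i j := fun i j => by
    have h := hCb i j; have h' := le_abs_self (α i j); linarith
  set F : Fin R → Fin D → Finset (Vec n) := fun i j =>
    (α i j + C j) • S₁ j + (C j - α i j) • S₂ j with hF
  set B : Fin R → Finset (Vec n) := fun i => ∑ j, F i j with hB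
  set T : Finset (Vec n) := ∑ j, (C j • S₁ j + C j • S₂ j) with hT
  have hFne : ∀ i j, (F i j).Nonempty := fun i j =>
    ((h₁ j).smul_finset).add ((h₂ j).smul_finset)
  have hBne : ∀ i, (B i).Nonempty := fun i => nonempty_sumF _ _ (fun j _ => hFne i j)
  have hTne : T.Nonempty :=
    nonempty_sumF _ _ (fun j _ => ((h₁ j).smul_finset).add ((h₂ j).smul_finset))
  have hGx : ∀ j x, G j x = pmax (S₁ j) x - pmax (S₂ j) x := fun j x => by
    rw [hfun j]
  -- pmax computations
  have hpmT : ∀ x, pmax T x = ∑ j, C j * (pmax (S₁ j) x + pmax (S₂ j) x) := by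
    intro x
    rw [hT, pmax_sumF _ _ (fun j _ => ((h₁ j).smul_finset).add ((h₂ j).smul_finset))]
    refine Finset.sum_congr rfl fun j _ => ?_
    rw [pmax_add ((h₁ j).smul_finset) ((h₂ j).smul_finset),
      pmax_smul (h₁ j) (hCpos j), pmax_smul (h₂ j) (hCpos j)]
    ring
  have hpmB : ∀ i x, pmax (B i) x = (∑ j, α i j * G j x) + pmax T x := by
    intro i x
    rw [hB, pmax_sumF _ _ (fun j _ => hFne i j), hpmT, ← Finset.sum_add_distrib]
    refine Finset.sum_congr rfl fun j _ => ?_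
    simp only [hF]
    rw [pmax_add ((h₁ j).smul_finset) ((h₂ j).smul_finset),
      pmax_smul (h₁ j) (hc1 i j), pmax_smul (h₂ j) (hc2 i j), hGx j x]
    ring
  -- the new data
  set δ : Fin R → Vec n := fun i => ∑ j, α i j • (v j - w j) with hδ
  set μ : Fin R → Vec n := fun i =>
    ∑ j, ((α i j + C j) • v j + (C j - α i j) • w j) with hμ
  set E' : Finset (Vec n) :=
    (Finset.univ.biUnion E) ∪
      ((Finset.univ.erase i₀).image (fun i => δ i - δ i₀)) with hE'
  set U' : Submodule ℝ (Vec n) := Submodule.span ℝ (E' : Set (Vec n)) with hU'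
  have hEsub : ∀ j, Submodule.span ℝ ((E j : Set (Vec n))) ≤ U' := by
    intro j
    apply Submodule.span_mono
    intro q hq
    refine Finset.mem_coe.2 ?_
    rw [hE']
    exact Finset.mem_union_left _
      (Finset.mem_biUnion.2 ⟨j, Finset.mem_univ j, Finset.mem_coe.1 hq⟩)
  have hδmem : ∀ i, δ i - δ i₀ ∈ U' := by
    intro i
    by_cases h : i = i₀
    · rw [h, sub_self]; exact U'.zero_mem
    · apply Submodule.subset_span
      refine Finset.mem_coe.2 ?_
      rw [hE']
      refine Finset.mem_union_right _ ?_
      exact Finset.mem_image.2 ⟨i, Finset.mem_erase.2 ⟨h, Finset.mem_univ i⟩, rfl⟩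
  have hμδ : ∀ i, μ i - μ i₀ = δ i - δ i₀ := by
    intro i
    simp only [hμ, hδ]
    rw [← Finset.sum_sub_distrib, ← Finset.sum_sub_distrib]
    refine Finset.sum_congr rfl fun j _ => ?_
    module
  have hmemB : ∀ i, ∀ e ∈ B i, e - μ i₀ ∈ U' := by
    intro i e he
    have hstep : e - μ i ∈ U' := by
      refine span_mem_sumF U' Finset.univ (F i)
        (fun j => (α i j + C j) • v j + (C j - α i j) • w j) ?_ e he
      intro j _ q hq
      simp only [hF] at hq
      obtain ⟨a, ha, b, hb, rfl⟩ := Finset.mem_add.1 hq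
      obtain ⟨a', ha', rfl⟩ := Finset.mem_smul_finset.1 ha
      obtain ⟨b', hb', rfl⟩ := Finset.mem_smul_finset.1 hb
      have h1 : (α i j + C j) • a' + (C j - α i j) • b'
          - ((α i j + C j) • v j + (C j - α i j) • w j)
          = (α i j + C j) • (a' - v j) + (C j - α i j) • (b' - w j) := by module
      rw [h1]
      exact U'.add_mem
        (U'.smul_mem _ (hEsub j (hm₁ j a' ha')))
        (U'.smul_mem _ (hEsub j (hm₂ j b' hb')))
    have : e - μ i₀ = (e - μ i) + (μ i - μ i₀) := by abel
    rw [this]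
    exact U'.add_mem hstep (by rw [hμδ i]; exact hδmem i)
  have hmemT : ∀ e ∈ T, e - (∑ j, (C j • v j + C j • w j)) ∈ U' := by
    refine span_mem_sumF U' Finset.univ _ (fun j => C j • v j + C j • w j) ?_
    intro j _ q hq
    obtain ⟨a, ha, b, hb, rfl⟩ := Finset.mem_add.1 hq
    obtain ⟨a', ha', rfl⟩ := Finset.mem_smul_finset.1 ha
    obtain ⟨b', hb', rfl⟩ := Finset.mem_smul_finset.1 hb
    have h1 : C j • a' + C j • b' - (C j • v j + C j • w j)
        = C j • (a' - v j) + C j • (b' - w j) := by module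
    rw [h1]
    exact U'.add_mem
      (U'.smul_mem _ (hEsub j (hm₁ j a' ha')))
      (U'.smul_mem _ (hEsub j (hm₂ j b' hb')))
  -- cardinality
  have hcardE' : E'.card ≤ D * m + (R - 1) := by
    rw [hE']
    refine le_trans (Finset.card_union_le _ _) ?_
    have hb1 : (Finset.univ.biUnion E).card ≤ D * m := by
      refine le_trans (Finset.card_biUnion_le) ?_
      calc ∑ j, (E j).card ≤ Finset.univ.card • m :=
            Finset.sum_le_card_nsmul _ _ m (fun j _ => hcard j)
        _ = D * m := by simp [Finset.card_univ, mul_comm]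
    have hb2 : ((Finset.univ.erase i₀).image (fun i => δ i - δ i₀)).card ≤ R - 1 := by
      refine le_trans (Finset.card_image_le) ?_
      rw [Finset.card_erase_of_mem (Finset.mem_univ i₀), Finset.card_univ]
      simp
    omega
  -- the function identity
  have hfeq : (fun x => ⨆ i, ∑ j, α i j * G j x)
      = fun x => pmax (Finset.univ.biUnion B) x - pmax T x := by
    funext x
    have hBU : (Finset.univ.biUnion B).Nonempty :=
      ⟨(hBne i₀).choose, Finset.mem_biUnion.2 ⟨i₀, Finset.mem_univ i₀, (hBne i₀).choose_spec⟩⟩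
    have h1 : pmax (Finset.univ.biUnion B) x
        = Finset.univ.sup' Finset.univ_nonempty (fun i => pmax (B i) x) := by
      apply le_antisymm
      · refine pmax_le hBU fun a ha => ?_
        obtain ⟨i, _, hai⟩ := Finset.mem_biUnion.1 ha
        exact le_trans (le_pmax hai x)
          (Finset.le_sup' (fun i => pmax (B i) x) (Finset.mem_univ i))
      · refine Finset.sup'_le _ _ fun i _ => ?_
        refine pmax_le (hBne i) fun a ha => ?_
        exact le_pmax (Finset.mem_biUnion.2 ⟨i, Finset.mem_univ i, ha⟩) x
    have h2 : Finset.univ.sup' Finset.univ_nonempty (fun i => pmax (B i) x)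
        = Finset.univ.sup' Finset.univ_nonempty (fun i => (∑ j, α i j * G j x) + pmax T x) :=
      Finset.sup'_congr _ rfl fun i _ => hpmB i x
    rw [h1, h2, sup'_add_const Finset.univ_nonempty (fun i => ∑ j, α i j * G j x) (pmax T x),
      fin_iSup_eq_sup' hR (fun i => ∑ j, α i j * G j x)]
    ring
  exact ⟨E', Finset.univ.biUnion B, T, μ i₀, ∑ j, (C j • v j + C j • w j),
    ⟨(hBne i₀).choose, Finset.mem_biUnion.2 ⟨i₀, Finset.mem_univ i₀, (hBne i₀).choose_spec⟩⟩,
    hTne, hcardE',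
    fun p hp => by
      obtain ⟨i, _, hpB⟩ := Finset.mem_biUnion.1 hp
      exact hmemB i p hpB,
    hmemT, hfeq⟩

end SMProof
namespace SMProof

variable {n : ℕ}

lemma mval_succ (d r : ℕ → ℕ) (ℓ : ℕ) :
    mval d r (ℓ + 1) = d (ℓ + 1) * mval d r ℓ + (r (ℓ + 1) - 1) := by
  rw [mval, mval, Finset.sum_Icc_succ_top (by omega : 1 ≤ ℓ + 1)]
  have hemp : Finset.Icc (ℓ + 1 + 1) (ℓ + 1) = ∅ := by
    apply Finset.Icc_eq_empty
    omega
  rw [hemp, Finset.prod_empty, mul_one]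
  have hsum : ∑ k ∈ Finset.Icc 1 ℓ, (r k - 1) * ∏ i ∈ Finset.Icc (k + 1) (ℓ + 1), d i
      = d (ℓ + 1) * ∑ k ∈ Finset.Icc 1 ℓ, (r k - 1) * ∏ i ∈ Finset.Icc (k + 1) ℓ, d i := by
    rw [Finset.mul_sum]
    refine Finset.sum_congr rfl fun k hk => ?_
    have hk' : k + 1 ≤ ℓ + 1 := by
      have := (Finset.mem_Icc.1 hk).2; omega
    rw [Finset.prod_Icc_succ_top hk']
    ring
  rw [hsum]

lemma nhat_rep (d r : ℕ → ℕ) (hd : ∀ k, 1 ≤ d k) (hr : ∀ k, 1 ≤ r k) :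
    ∀ (ℓ : ℕ) (g : Vec n → ℝ), g ∈ Nhat n d r ℓ → Rep (mval d r ℓ) g := by
  intro ℓ
  induction ℓ with
  | zero =>
      intro g hg
      obtain ⟨v, rfl⟩ := hg
      have h0 : mval d r 0 = 0 := by
        rw [mval]
        simp
      rw [h0]
      exact rep_base v
  | succ k ih =>
      intro g hg
      obtain ⟨α, G, hG, rfl⟩ := hg
      rw [mval_succ]
      exact rep_step (hr (k + 1)) (hd (k + 1)) α G (fun j => ih (G j) (hG j))

end SMProof

/-- `N_n(ℓ,d,r) ⊆ MAX_n(m_ℓ + 1)`. -/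
theorem Nfull_subset_MAXn {n : ℕ} (ℓ : ℕ) (d r : ℕ → ℕ) (hd1 : d 1 = n)
    (hd : ∀ k, 1 ≤ d k) (hr : ∀ k, 1 ≤ r k) :
    Nfull n d r ℓ ⊆ MAXn n (mval d r ℓ + 1) := by
  intro f hf
  obtain ⟨p, c, G, hG, rfl⟩ := hf
  exact SMProof.maxn_sum Finset.univ c G
    (fun i _ => SMProof.rep_maxn (SMProof.nhat_rep d r hd hr ℓ (G i) (hG i)))
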